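/- Let p be a prime with p ≥ n and let E ⊆ GL_n(F_p) be an elementary abelian p-subgroup of order p^r. Then every element of E is unipotent, and the set {log(g) : g ∈ E} ⊆ M_n(F_p) is an F_p-linear subspace of dimension r, all of whose elements are nilpotent and pairwise commute. -/

import Mathlib

open Polynomial

namespace TlogAux

/-- The truncated logarithm polynomial `∑_{i=1}^{p-1} (-1)^{i+1}/i · X^i`. -/
noncomputable def Lpoly (p : ℕ) : Polynomial (ZMod p) :=
  ∑ i ∈ Finset.Icc 1 (p - 1), C ((-1 : ZMod p) ^ (i + 1) * (i : ZMod p)⁻¹) * X ^ i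

/-- The truncated exponential polynomial `∑_{i=0}^{p-1} X^i/i!`. -/
noncomputable def Epoly (p : ℕ) : Polynomial (ZMod p) :=
  ∑ i ∈ Finset.range p, C ((i.factorial : ZMod p)⁻¹) * X ^ i

variable (p : ℕ) [hp : Fact p.Prime]

lemma natCast_ne_zero {i : ℕ} (h1 : i ≠ 0) (h2 : i < p) : (i : ZMod p) ≠ 0 := by
  rw [Ne, ZMod.natCast_eq_zero_iff]
  exact fun hd => absurd (Nat.le_of_dvd (Nat.pos_of_ne_zero h1) hd) (by omega)

lemma coeff0_Lpoly : (Lpoly p).coeff 0 = 0 := by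
  rw [Lpoly, finset_sum_coeff]
  refine Finset.sum_eq_zero fun i hi => ?_
  simp only [Finset.mem_Icc] at hi
  rw [coeff_C_mul, coeff_X_pow, if_neg (by omega), mul_zero]

lemma derivative_Lpoly :
    derivative (Lpoly p) = ∑ j ∈ Finset.range (p - 1), (-X : Polynomial (ZMod p)) ^ j := by
  have h1 : Finset.Icc 1 (p - 1) = Finset.Ico 1 p := by
    rw [← Finset.Ico_add_one_right_eq_Icc]
    congr 1
    have := hp.out.two_le
    omega
  rw [Lpoly, derivative_sum]
  have h2 : ∀ i ∈ Finset.Icc 1 (p - 1),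
      derivative (C ((-1 : ZMod p) ^ (i + 1) * (i : ZMod p)⁻¹) * X ^ i)
        = C ((-1 : ZMod p) ^ (i + 1)) * X ^ (i - 1) := by
    intro i hi
    simp only [Finset.mem_Icc] at hi
    have := hp.out.two_le
    rw [derivative_C_mul_X_pow, mul_assoc,
      inv_mul_cancel₀ (natCast_ne_zero p (by omega) (by omega)), mul_one]
  rw [Finset.sum_congr rfl h2, h1, Finset.sum_Ico_eq_sum_range]
  refine Finset.sum_congr rfl fun j hj => ?_
  have h3 : (-1 : ZMod p) ^ (1 + j + 1) = (-1 : ZMod p) ^ j := by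
    rw [show 1 + j + 1 = j + 2 by omega, pow_add]
    simp
  have h4 : ((-X : Polynomial (ZMod p)) ^ j) = C ((-1 : ZMod p) ^ j) * X ^ j := by
    rw [neg_pow (X : Polynomial (ZMod p))]
    simp [map_pow]
  rw [h3, show 1 + j - 1 = j by omega, h4]

lemma one_add_X_mul_derivative_Lpoly :
    (1 + X) * derivative (Lpoly p) = 1 - X ^ (p - 1) := by
  have hgeom := geom_sum_mul (-X : Polynomial (ZMod p)) (p - 1)
  have h2 : (-X : Polynomial (ZMod p)) ^ (p - 1) = C ((-1 : ZMod p) ^ (p - 1)) * X ^ (p - 1) := by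
    rw [neg_pow (X : Polynomial (ZMod p))]
    simp [map_pow]
  have h3 : ((-1 : ZMod p) ^ (p - 1)) = 1 :=
    ZMod.pow_card_sub_one_eq_one (neg_ne_zero.mpr one_ne_zero)
  rw [h2, h3, map_one, one_mul] at hgeom
  rw [derivative_Lpoly]
  linear_combination -hgeom

lemma coeff0_Epoly : (Epoly p).coeff 0 = 1 := by
  rw [Epoly, finset_sum_coeff]
  rw [Finset.sum_eq_single 0]
  · simp
  · intro i _ hi
    rw [coeff_C_mul, coeff_X_pow, if_neg (by omega), mul_zero]
  · intro h
    exact absurd (Finset.mem_range.mpr hp.out.pos) h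

lemma derivative_Epoly :
    derivative (Epoly p) = Epoly p - C (((p - 1).factorial : ZMod p)⁻¹) * X ^ (p - 1) := by
  have hp1 : p = (p - 1) + 1 := by have := hp.out.two_le; omega
  have key : derivative (Epoly p)
      = ∑ j ∈ Finset.range (p - 1), C ((j.factorial : ZMod p)⁻¹) * X ^ j := by
    rw [Epoly, derivative_sum]
    rw [show (Finset.range p) = Finset.range ((p - 1) + 1) from by rw [← hp1]]
    rw [Finset.sum_range_succ']
    have h0 : derivative (C (((0:ℕ).factorial : ZMod p)⁻¹) * X ^ 0) = 0 := by
      simp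
    rw [h0, add_zero]
    refine Finset.sum_congr rfl fun j hj => ?_
    simp only [Finset.mem_range] at hj
    rw [derivative_C_mul_X_pow, show j + 1 - 1 = j from rfl]
    have hfact : (((j + 1).factorial : ℕ) : ZMod p) = ((j + 1 : ℕ) : ZMod p) * ((j.factorial : ℕ) : ZMod p) := by
      rw [Nat.factorial_succ, Nat.cast_mul]
    have hj1 : ((j + 1 : ℕ) : ZMod p) ≠ 0 := natCast_ne_zero p (by omega) (by omega)
    congr 1
    rw [hfact, mul_inv, mul_comm, ← mul_assoc, mul_inv_cancel₀ hj1, one_mul]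
  rw [key]
  have : Epoly p = (∑ j ∈ Finset.range (p - 1), C ((j.factorial : ZMod p)⁻¹) * X ^ j)
      + C (((p - 1).factorial : ZMod p)⁻¹) * X ^ (p - 1) := by
    rw [Epoly]
    conv_lhs => rw [show (Finset.range p) = Finset.range ((p - 1) + 1) from by rw [← hp1]]
    rw [Finset.sum_range_succ]
  rw [this]
  ring

lemma X_mul_divX_Lpoly : Lpoly p = X * (Lpoly p).divX := by
  conv_lhs => rw [← X_mul_divX_add (Lpoly p)]
  rw [coeff0_Lpoly, map_zero, add_zero]

lemma keyQ :
    (1 + X) * derivative ((Epoly p).comp (Lpoly p) - 1 - X)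
      = ((Epoly p).comp (Lpoly p) - 1 - X) * (1 - X ^ (p - 1))
        + X ^ (p - 1) * (-(1 + X) - C (((p - 1).factorial : ZMod p)⁻¹)
            * ((Lpoly p).divX) ^ (p - 1) * (1 - X ^ (p - 1))) := by
  have hd : derivative ((Epoly p).comp (Lpoly p) - 1 - X)
      = derivative (Lpoly p) * ((Epoly p).comp (Lpoly p)
          - C (((p - 1).factorial : ZMod p)⁻¹) * (Lpoly p) ^ (p - 1)) - 1 := by
    rw [derivative_sub, derivative_sub, derivative_one, derivative_X, derivative_comp,
      derivative_Epoly, sub_comp, mul_comp, C_comp, X_pow_comp]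
    ring
  have h1 := one_add_X_mul_derivative_Lpoly p
  have h2 : (Lpoly p) ^ (p - 1) = X ^ (p - 1) * ((Lpoly p).divX) ^ (p - 1) := by
    conv_lhs => rw [X_mul_divX_Lpoly p]
    rw [mul_pow]
  rw [hd, h2]
  linear_combination (((Epoly p).comp (Lpoly p)
    - C (((p - 1).factorial : ZMod p)⁻¹) * (X ^ (p - 1) * ((Lpoly p).divX) ^ (p - 1)))) * h1

lemma coeffQ : ∀ d < p, ((Epoly p).comp (Lpoly p) - 1 - X).coeff d = 0 := by
  set Q := (Epoly p).comp (Lpoly p) - 1 - X with hQ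
  intro d
  induction d using Nat.strong_induction_on with
  | _ d IH =>
    intro hd
    match d with
    | 0 =>
      rw [coeff_zero_eq_eval_zero, hQ]
      simp only [eval_sub, eval_one, eval_X, eval_comp]
      have hL0 : eval 0 (Lpoly p) = 0 := by rw [← coeff_zero_eq_eval_zero, coeff0_Lpoly]
      have hE0 : eval (0 : ZMod p) (Epoly p) = 1 := by rw [← coeff_zero_eq_eval_zero, coeff0_Epoly]
      rw [hL0, hE0]
      ring
    | e + 1 =>
      have he : e + 1 < p := hd
      have hQe : Q.coeff e = 0 := IH e (by omega) (by omega)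
      have h := keyQ p
      rw [← hQ] at h
      have h2 := congrArg (fun f : Polynomial (ZMod p) => f.coeff e) h
      simp only [coeff_add] at h2
      have hL : ((1 + X) * derivative Q).coeff e = Q.coeff (e + 1) * ((e : ZMod p) + 1) := by
        rw [add_mul, one_mul, coeff_add, coeff_derivative]
        have hX : (X * derivative Q).coeff e = 0 := by
          match e, he with
          | 0, _ => rw [mul_coeff_zero, coeff_X_zero, zero_mul]
          | e' + 1, he =>
            rw [coeff_X_mul, coeff_derivative, IH (e' + 1) (by omega) (by omega), zero_mul]
        rw [hX, add_zero]
      have hR1 : (Q * (1 - X ^ (p - 1))).coeff e = 0 := by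
        rw [mul_sub, mul_one, coeff_sub, hQe, coeff_mul_X_pow', if_neg (by omega), sub_zero]
      have hR2 : ∀ G : Polynomial (ZMod p), (X ^ (p - 1) * G).coeff e = 0 := fun G => by
        rw [mul_comm, coeff_mul_X_pow', if_neg (by omega)]
      rw [hL, hR1, hR2 _, add_zero] at h2
      have hne : ((e : ZMod p) + 1) ≠ 0 := by
        have h3 := natCast_ne_zero p (i := e + 1) (by omega) (by omega)
        push_cast at h3
        exact h3
      exact (mul_eq_zero.mp h2).resolve_right hne

lemma aeval_eq_zero_of_lowCoeff {A : Type*} [Ring A] [Algebra (ZMod p) A]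
    (x : A) (hx : ∀ i, p ≤ i → x ^ i = 0) (f : Polynomial (ZMod p))
    (hf : ∀ d < p, f.coeff d = 0) : aeval x f = 0 := by
  conv_lhs => rw [as_sum_support f]
  rw [map_sum]
  refine Finset.sum_eq_zero fun i hi => ?_
  rw [aeval_monomial]
  rcases lt_or_ge i p with h | h
  · exact absurd (hf i h) (mem_support_iff.mp hi)
  · rw [hx i h, mul_zero]

/-- `exp (log u) = u` for truncated series, whenever `x^i = 0` for `i ≥ p`. -/
lemma exp_log {A : Type*} [Ring A] [Algebra (ZMod p) A]
    (x : A) (hx : ∀ i, p ≤ i → x ^ i = 0) :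
    aeval (aeval x (Lpoly p)) (Epoly p) = 1 + x := by
  have h0 := aeval_eq_zero_of_lowCoeff p x hx _ (coeffQ p)
  rw [map_sub, map_sub, aeval_comp, map_one, aeval_X, sub_sub, sub_eq_zero] at h0
  exact h0

omit hp in
lemma pow_vanish {A : Type*} [MonoidWithZero A] {x : A} (hx : x ^ p = 0) :
    ∀ i, p ≤ i → x ^ i = 0 := fun i hi => by
  rw [show i = (i - p) + p by omega, pow_add, hx, mul_zero]

lemma commute_aeval {K : Type*} [CommSemiring K] {R : Type*} [Semiring R] [Algebra K R]
    {x y : R} (h : Commute x y) (f g : Polynomial K) :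
    Commute (aeval x f) (aeval y g) := by
  have h1 : ∀ f : Polynomial K, Commute (aeval x f) y := fun f => by
    induction f using Polynomial.induction_on' with
    | add a b ha hb => rw [map_add]; exact ha.add_left hb
    | monomial n a =>
      rw [aeval_monomial]
      exact (Algebra.commute_algebraMap_left a y).mul_left (h.pow_left n)
  induction g using Polynomial.induction_on' with
  | add a b ha hb => rw [map_add]; exact ha.add_right hb
  | monomial n a =>
    rw [aeval_monomial]
    exact ((Algebra.commute_algebraMap_right a _).mul_right ((h1 f).pow_right n))


/-- "all coefficients in total degree `< m` vanish" -/
def MLZ (p m : ℕ) (f : MvPolynomial (Fin 2) (ZMod p)) : Prop :=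
  ∀ d : Fin 2 →₀ ℕ, d 0 + d 1 < m → MvPolynomial.coeff d f = 0

section MV

variable {p : ℕ}

lemma mlz_add {m} {f g : MvPolynomial (Fin 2) (ZMod p)} (hf : MLZ p m f) (hg : MLZ p m g) :
    MLZ p m (f + g) := fun d hd => by
  rw [MvPolynomial.coeff_add, hf d hd, hg d hd, add_zero]

lemma mlz_neg {m} {f : MvPolynomial (Fin 2) (ZMod p)} (hf : MLZ p m f) : MLZ p m (-f) :=
  fun d hd => by rw [MvPolynomial.coeff_neg, hf d hd, neg_zero]

lemma mlz_sub {m} {f g : MvPolynomial (Fin 2) (ZMod p)} (hf : MLZ p m f) (hg : MLZ p m g) :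
    MLZ p m (f - g) := by
  rw [sub_eq_add_neg]; exact mlz_add hf (mlz_neg hg)

lemma mlz_mul_left {m} (f : MvPolynomial (Fin 2) (ZMod p)) {g : MvPolynomial (Fin 2) (ZMod p)}
    (hg : MLZ p m g) : MLZ p m (f * g) := fun d hd => by
  classical
  rw [MvPolynomial.coeff_mul]
  refine Finset.sum_eq_zero fun x hx => ?_
  rw [Finset.HasAntidiagonal.mem_antidiagonal] at hx
  have h0 : x.1 0 + x.2 0 = d 0 := by rw [← hx, Finsupp.add_apply]
  have h1 : x.1 1 + x.2 1 = d 1 := by rw [← hx, Finsupp.add_apply]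
  rw [hg x.2 (by omega), mul_zero]

lemma mlz_mul {a b} {f g : MvPolynomial (Fin 2) (ZMod p)} (hf : MLZ p a f) (hg : MLZ p b g) :
    MLZ p (a + b) (f * g) := fun d hd => by
  classical
  rw [MvPolynomial.coeff_mul]
  refine Finset.sum_eq_zero fun x hx => ?_
  rw [Finset.HasAntidiagonal.mem_antidiagonal] at hx
  have h0 : x.1 0 + x.2 0 = d 0 := by rw [← hx, Finsupp.add_apply]
  have h1 : x.1 1 + x.2 1 = d 1 := by rw [← hx, Finsupp.add_apply]
  rcases lt_or_ge (x.1 0 + x.1 1) a with h | h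
  · rw [hf x.1 h, zero_mul]
  · rw [hg x.2 (by omega), mul_zero]

lemma mlz_pow {f : MvPolynomial (Fin 2) (ZMod p)} (hf : MLZ p 1 f) :
    ∀ e, MLZ p e (f ^ e)
  | 0 => fun d hd => by omega
  | e + 1 => by rw [pow_succ]; exact mlz_mul (mlz_pow hf e) hf

lemma mlz_xpow_mul (i : Fin 2) (e : ℕ) (g : MvPolynomial (Fin 2) (ZMod p)) :
    MLZ p e (MvPolynomial.X i ^ e * g) := fun d hd => by
  classical
  rw [MvPolynomial.coeff_mul]
  refine Finset.sum_eq_zero fun x hx => ?_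
  rw [Finset.HasAntidiagonal.mem_antidiagonal] at hx
  rw [MvPolynomial.coeff_X_pow]
  by_cases hxe : Finsupp.single i e = x.1
  · exfalso
    have h0 : x.1 0 + x.2 0 = d 0 := by rw [← hx, Finsupp.add_apply]
    have h1 : x.1 1 + x.2 1 = d 1 := by rw [← hx, Finsupp.add_apply]
    have hs : x.1 0 + x.1 1 = e := by
      rw [← hxe]
      fin_cases i <;> simp [Finsupp.single_apply]
    omega
  · rw [if_neg hxe, zero_mul]

lemma mlz_mul_right {m} {f : MvPolynomial (Fin 2) (ZMod p)} (hf : MLZ p m f)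
    (g : MvPolynomial (Fin 2) (ZMod p)) : MLZ p m (f * g) := by
  rw [mul_comm]; exact mlz_mul_left g hf

lemma mlz_xpow (i : Fin 2) (e : ℕ) : MLZ p e (MvPolynomial.X i ^ e) := by
  have := mlz_xpow_mul (p := p) i e 1
  rwa [mul_one] at this

lemma coeff_pderiv_eq (i : Fin 2) (f : MvPolynomial (Fin 2) (ZMod p)) (d : Fin 2 →₀ ℕ)
    (hd : d i ≠ 0) :
    MvPolynomial.coeff (d - Finsupp.single i 1) (MvPolynomial.pderiv i f)
      = (d i : ZMod p) * MvPolynomial.coeff d f := by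
  classical
  induction f using MvPolynomial.induction_on' with
  | add f g hf hg => rw [map_add, MvPolynomial.coeff_add, MvPolynomial.coeff_add, hf, hg, mul_add]
  | monomial u a =>
    rw [MvPolynomial.pderiv_monomial, MvPolynomial.coeff_monomial, MvPolynomial.coeff_monomial]
    by_cases h : u = d
    · subst h
      rw [if_pos rfl, if_pos rfl]
      exact mul_comm a _
    · rw [if_neg h]
      by_cases h2 : u - Finsupp.single i 1 = d - Finsupp.single i 1
      · have hui : u i = 0 := by
          by_contra hui
          apply h
          ext j
          have hj := congrArg (fun w : Fin 2 →₀ ℕ => w j) h2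
          simp only [Finsupp.tsub_apply] at hj
          rcases eq_or_ne j i with rfl | hne
          · rw [Finsupp.single_eq_same] at hj
            omega
          · rw [Finsupp.single_apply, if_neg (fun hh => hne hh.symm)] at hj
            omega
        rw [if_pos h2, hui]
        simp
      · rw [if_neg h2, mul_zero]

lemma pderiv_polyaeval (i : Fin 2) (f : Polynomial (ZMod p)) (z : MvPolynomial (Fin 2) (ZMod p)) :
    MvPolynomial.pderiv i (Polynomial.aeval z f)
      = Polynomial.aeval z (derivative f) * MvPolynomial.pderiv i z := by
  induction f using Polynomial.induction_on' with
  | add a b ha hb => simp only [map_add, ha, hb]; ring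
  | monomial n a =>
    rw [Polynomial.aeval_monomial, derivative_monomial, Polynomial.aeval_monomial,
      MvPolynomial.algebraMap_eq, MvPolynomial.pderiv_C_mul, MvPolynomial.pderiv_pow,
      map_mul, map_natCast]
    ring

end MV

section MVKey

variable (p : ℕ) [hp : Fact p.Prime]

lemma mlz_pderiv (i j : Fin 2) (hij : j ≠ i) :
    MLZ p (p - 1) (MvPolynomial.pderiv i
      (Polynomial.aeval (MvPolynomial.X i + MvPolynomial.X j
          + MvPolynomial.X i * MvPolynomial.X j : MvPolynomial (Fin 2) (ZMod p)) (Lpoly p)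
        - Polynomial.aeval (MvPolynomial.X i) (Lpoly p)
        - Polynomial.aeval (MvPolynomial.X j) (Lpoly p))) := by
  classical
  set Z : MvPolynomial (Fin 2) (ZMod p) :=
    MvPolynomial.X i + MvPolynomial.X j + MvPolynomial.X i * MvPolynomial.X j with hZdef
  set LZ' : MvPolynomial (Fin 2) (ZMod p) := Polynomial.aeval Z (derivative (Lpoly p)) with hLZ'
  set Li' : MvPolynomial (Fin 2) (ZMod p) :=
    Polynomial.aeval (MvPolynomial.X i) (derivative (Lpoly p)) with hLi'
  set Lj' : MvPolynomial (Fin 2) (ZMod p) :=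
    Polynomial.aeval (MvPolynomial.X j) (derivative (Lpoly p)) with hLj'
  set P : MvPolynomial (Fin 2) (ZMod p) :=
    Polynomial.aeval Z (Lpoly p) - Polynomial.aeval (MvPolynomial.X i) (Lpoly p)
      - Polynomial.aeval (MvPolynomial.X j) (Lpoly p) with hPdef
  have hz : MvPolynomial.pderiv i Z = 1 + MvPolynomial.X j := by
    rw [hZdef, map_add, map_add, MvPolynomial.pderiv_X_self, MvPolynomial.pderiv_X_of_ne hij,
      MvPolynomial.pderiv_mul, MvPolynomial.pderiv_X_self, MvPolynomial.pderiv_X_of_ne hij]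
    ring
  have hpd : MvPolynomial.pderiv i P = LZ' * (1 + MvPolynomial.X j) - Li' := by
    rw [hPdef, map_sub, map_sub, pderiv_polyaeval, pderiv_polyaeval, pderiv_polyaeval, hz,
      MvPolynomial.pderiv_X_self, MvPolynomial.pderiv_X_of_ne hij, mul_zero, mul_one, ← hLZ',
      ← hLi']
    ring
  have haZ : (1 + Z) * LZ' = 1 - Z ^ (p - 1) := by
    have h := congrArg (Polynomial.aeval Z) (one_add_X_mul_derivative_Lpoly p)
    simpa only [map_mul, map_add, map_one, map_sub, map_pow, Polynomial.aeval_X] using h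
  have hai : (1 + MvPolynomial.X i) * Li' = 1 - (MvPolynomial.X i : MvPolynomial (Fin 2) (ZMod p)) ^ (p - 1) := by
    have h := congrArg (Polynomial.aeval (MvPolynomial.X i : MvPolynomial (Fin 2) (ZMod p)))
      (one_add_X_mul_derivative_Lpoly p)
    simpa only [map_mul, map_add, map_one, map_sub, map_pow, Polynomial.aeval_X] using h
  have haj : (1 + MvPolynomial.X j) * Lj' = 1 - (MvPolynomial.X j : MvPolynomial (Fin 2) (ZMod p)) ^ (p - 1) := by
    have h := congrArg (Polynomial.aeval (MvPolynomial.X j : MvPolynomial (Fin 2) (ZMod p)))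
      (one_add_X_mul_derivative_Lpoly p)
    simpa only [map_mul, map_add, map_one, map_sub, map_pow, Polynomial.aeval_X] using h
  have hW : (1 + MvPolynomial.X i) * (1 + MvPolynomial.X j) * (Li' * Lj')
      = (1 - MvPolynomial.X i ^ (p - 1)) * (1 - MvPolynomial.X j ^ (p - 1)) := by
    linear_combination ((1 + MvPolynomial.X j) * Lj') * hai
      + (1 - (MvPolynomial.X i : MvPolynomial (Fin 2) (ZMod p)) ^ (p - 1)) * haj
  have hE : (1 + MvPolynomial.X i) * (1 + MvPolynomial.X j) * (MvPolynomial.pderiv i P)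
      = (MvPolynomial.X i ^ (p - 1) - Z ^ (p - 1)) * (1 + MvPolynomial.X j) := by
    rw [hpd, hZdef]
    rw [hZdef] at haZ
    linear_combination (1 + (MvPolynomial.X j : MvPolynomial (Fin 2) (ZMod p))) * haZ
      - (1 + (MvPolynomial.X j : MvPolynomial (Fin 2) (ZMod p))) * hai
  have hfinal : MvPolynomial.pderiv i P
      = (MvPolynomial.X i ^ (p - 1) + MvPolynomial.X j ^ (p - 1)
          - MvPolynomial.X i ^ (p - 1) * MvPolynomial.X j ^ (p - 1)) * MvPolynomial.pderiv i P
        + (Li' * Lj') * ((MvPolynomial.X i ^ (p - 1) - Z ^ (p - 1)) * (1 + MvPolynomial.X j)) := by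
    linear_combination (Li' * Lj') * hE - (MvPolynomial.pderiv i P) * hW
  rw [hfinal]
  have hZ1 : MLZ p 1 Z := by
    intro d hd
    have h0 : d = 0 := by
      ext k
      fin_cases k <;> simp <;> omega
    subst h0
    have : MvPolynomial.coeff (0 : Fin 2 →₀ ℕ) Z = MvPolynomial.constantCoeff Z := rfl
    rw [this, hZdef, map_add, map_add, map_mul, MvPolynomial.constantCoeff_X]
    simp
  apply mlz_add
  · have hexp : (MvPolynomial.X i ^ (p - 1) + MvPolynomial.X j ^ (p - 1)
          - MvPolynomial.X i ^ (p - 1) * MvPolynomial.X j ^ (p - 1)) * MvPolynomial.pderiv i P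
        = MvPolynomial.X i ^ (p - 1) * MvPolynomial.pderiv i P
          + MvPolynomial.X j ^ (p - 1) * MvPolynomial.pderiv i P
          - MvPolynomial.X i ^ (p - 1) * (MvPolynomial.X j ^ (p - 1) * MvPolynomial.pderiv i P) := by
      ring
    rw [hexp]
    exact mlz_sub (mlz_add (mlz_xpow_mul _ _ _) (mlz_xpow_mul _ _ _)) (mlz_xpow_mul _ _ _)
  · exact mlz_mul_left _ (mlz_mul_right (mlz_sub (mlz_xpow i (p - 1)) (mlz_pow hZ1 (p - 1))) _)

lemma mv_coeff_low :
    ∀ d : Fin 2 →₀ ℕ, d 0 + d 1 < p →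
      MvPolynomial.coeff d
        (Polynomial.aeval (MvPolynomial.X 0 + MvPolynomial.X 1
            + MvPolynomial.X 0 * MvPolynomial.X 1 : MvPolynomial (Fin 2) (ZMod p)) (Lpoly p)
          - Polynomial.aeval (MvPolynomial.X 0) (Lpoly p)
          - Polynomial.aeval (MvPolynomial.X 1) (Lpoly p)) = 0 := by
  classical
  intro d hd
  by_cases hd0 : d = 0
  · subst hd0
    have hval : ∀ z : MvPolynomial (Fin 2) (ZMod p),
        MvPolynomial.aeval (0 : Fin 2 → ZMod p) z = 0 →
        MvPolynomial.aeval (0 : Fin 2 → ZMod p) (Polynomial.aeval z (Lpoly p)) = 0 := by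
      intro z hz
      rw [← Polynomial.aeval_algHom_apply, hz]
      have : Polynomial.aeval (0 : ZMod p) (Lpoly p) = eval 0 (Lpoly p) := by
        rw [Polynomial.aeval_def, Algebra.algebraMap_self]
        rfl
      rw [this, ← coeff_zero_eq_eval_zero, coeff0_Lpoly]
    have h1 := hval (MvPolynomial.X 0 + MvPolynomial.X 1 + MvPolynomial.X 0 * MvPolynomial.X 1)
      (by simp)
    have h2 := hval (MvPolynomial.X 0) (by simp)
    have h3 := hval (MvPolynomial.X 1) (by simp)
    have h4 : ∀ f : MvPolynomial (Fin 2) (ZMod p),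
        MvPolynomial.coeff (0 : Fin 2 →₀ ℕ) f = MvPolynomial.aeval (0 : Fin 2 → ZMod p) f := by
      intro f
      rw [MvPolynomial.aeval_zero, Algebra.algebraMap_self_apply]
      rfl
    rw [h4, map_sub, map_sub, h1, h2, h3]
    ring
  · have main2 : ∀ (i j : Fin 2), j ≠ i → d i ≠ 0 →
        MvPolynomial.coeff d
          (Polynomial.aeval (MvPolynomial.X i + MvPolynomial.X j
              + MvPolynomial.X i * MvPolynomial.X j : MvPolynomial (Fin 2) (ZMod p)) (Lpoly p)
            - Polynomial.aeval (MvPolynomial.X i) (Lpoly p)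
            - Polynomial.aeval (MvPolynomial.X j) (Lpoly p)) = 0 := by
      intro i j hij hi
      have hpd := mlz_pderiv p i j hij
      have hco := coeff_pderiv_eq i
        (Polynomial.aeval (MvPolynomial.X i + MvPolynomial.X j
            + MvPolynomial.X i * MvPolynomial.X j : MvPolynomial (Fin 2) (ZMod p)) (Lpoly p)
          - Polynomial.aeval (MvPolynomial.X i) (Lpoly p)
          - Polynomial.aeval (MvPolynomial.X j) (Lpoly p)) d hi
      have hfin2 : i = 0 ∨ i = 1 := by
        rcases i with ⟨iv, hiv⟩
        interval_cases iv
        · exact Or.inl rfl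
        · exact Or.inr rfl
      have hlow : (d - Finsupp.single i 1 : Fin 2 →₀ ℕ) 0
          + (d - Finsupp.single i 1 : Fin 2 →₀ ℕ) 1 < p - 1 := by
        rcases hfin2 with rfl | rfl
        · rw [Finsupp.tsub_apply, Finsupp.tsub_apply, Finsupp.single_eq_same,
            Finsupp.single_eq_of_ne (by decide)]
          omega
        · rw [Finsupp.tsub_apply, Finsupp.tsub_apply, Finsupp.single_eq_same,
            Finsupp.single_eq_of_ne (by decide)]
          omega
      rw [hpd _ hlow] at hco
      have hne : ((d i : ℕ) : ZMod p) ≠ 0 := by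
        refine natCast_ne_zero p hi ?_
        rcases hfin2 with rfl | rfl <;> omega
      exact ((mul_eq_zero.mp hco.symm).resolve_left hne)
    obtain ⟨i, hi⟩ : ∃ i, d i ≠ 0 := by
      by_contra hcon
      push_neg at hcon
      exact hd0 (Finsupp.ext hcon)
    fin_cases i
    · exact main2 0 1 (by decide) hi
    · have h := main2 1 0 (by decide) hi
      have hPP : (Polynomial.aeval (MvPolynomial.X 0 + MvPolynomial.X 1
            + MvPolynomial.X 0 * MvPolynomial.X 1 : MvPolynomial (Fin 2) (ZMod p)) (Lpoly p)
          - Polynomial.aeval (MvPolynomial.X 0) (Lpoly p)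
          - Polynomial.aeval (MvPolynomial.X 1) (Lpoly p))
          = (Polynomial.aeval (MvPolynomial.X 1 + MvPolynomial.X 0
            + MvPolynomial.X 1 * MvPolynomial.X 0 : MvPolynomial (Fin 2) (ZMod p)) (Lpoly p)
          - Polynomial.aeval (MvPolynomial.X 1) (Lpoly p)
          - Polynomial.aeval (MvPolynomial.X 0) (Lpoly p)) := by
        rw [show (MvPolynomial.X 0 + MvPolynomial.X 1
            + MvPolynomial.X 0 * MvPolynomial.X 1 : MvPolynomial (Fin 2) (ZMod p))
          = MvPolynomial.X 1 + MvPolynomial.X 0 + MvPolynomial.X 1 * MvPolynomial.X 0 from by ring]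
        ring
      rw [hPP]
      exact h

end MVKey


section Flag

lemma flag_end {kk V : Type*} [Field kk] [AddCommGroup V] [Module kk V] [FiniteDimensional kk V]
    (a b : Module.End kk V) (hc : Commute a b) (ha : IsNilpotent a) (hb : IsNilpotent b) :
    ∀ i j : ℕ, Module.finrank kk V ≤ i + j → a ^ i * b ^ j = 0 := by
  classical
  set W : ℕ → Submodule kk V :=
    fun m => ⨆ i : Fin (m + 1), LinearMap.range (a ^ (i : ℕ) * b ^ (m - (i : ℕ))) with hW
  have hle : ∀ m (i j : ℕ), i + j = m → LinearMap.range (a ^ i * b ^ j) ≤ W m := by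
    intro m i j hij
    have hj : j = m - i := by omega
    subst hj
    exact le_iSup (fun t : Fin (m + 1) =>
      LinearMap.range (a ^ (t : ℕ) * b ^ (m - (t : ℕ)))) ⟨i, by omega⟩
  have hmono : ∀ m, W (m + 1) ≤ W m := by
    intro m
    refine iSup_le fun t => ?_
    rcases t with ⟨i, hi⟩
    cases i with
    | zero =>
      have h1 : (a ^ 0 * b ^ (m + 1 - 0) : Module.End kk V) = (a ^ 0 * b ^ (m - 0)) * b := by
        rw [pow_zero, one_mul, one_mul, Nat.sub_zero, Nat.sub_zero, ← pow_succ]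
      rw [h1, Module.End.mul_eq_comp]
      exact (LinearMap.range_comp_le_range _ _).trans (hle m 0 m (by omega))
    | succ i =>
      have h1 : (a ^ (i + 1) * b ^ (m + 1 - (i + 1)) : Module.End kk V)
          = (a ^ i * b ^ (m - i)) * a := by
        rw [show m + 1 - (i + 1) = m - i from by omega, pow_succ, mul_assoc, mul_assoc]
        congr 1
        exact (hc.pow_right (m - i)).eq
      rw [h1, Module.End.mul_eq_comp]
      exact (LinearMap.range_comp_le_range _ _).trans (hle m i (m - i) (by omega))
  have hmapa : ∀ m, Submodule.map a (W (m + 1)) ≤ W (m + 2) := by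
    intro m
    rw [hW, Submodule.map_iSup]
    refine iSup_le fun t => ?_
    rcases t with ⟨i, hi⟩
    rw [← LinearMap.range_comp, ← Module.End.mul_eq_comp]
    have h1 : a * (a ^ i * b ^ (m + 1 - i)) = a ^ (i + 1) * b ^ ((m + 2) - (i + 1)) := by
      rw [show (m + 2) - (i + 1) = m + 1 - i from by omega, ← mul_assoc, ← pow_succ']
    rw [h1]
    exact hle (m + 2) (i + 1) (m + 2 - (i + 1)) (by omega)
  have hmapb : ∀ m, Submodule.map b (W (m + 1)) ≤ W (m + 2) := by
    intro m
    rw [hW, Submodule.map_iSup]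
    refine iSup_le fun t => ?_
    rcases t with ⟨i, hi⟩
    rw [← LinearMap.range_comp, ← Module.End.mul_eq_comp]
    have h1 : b * (a ^ i * b ^ (m + 1 - i)) = a ^ i * b ^ ((m + 2) - i) := by
      rw [show (m + 2) - i = (m + 1 - i) + 1 from by omega, ← mul_assoc,
        (hc.symm.pow_right i).eq, mul_assoc, ← pow_succ']
    rw [h1]
    exact hle (m + 2) i (m + 2 - i) (by omega)
  have hstep : ∀ m, W (m + 1) = W m → W (m + 2) = W (m + 1) := by
    intro m hm
    refine le_antisymm (hmono (m + 1)) ?_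
    refine iSup_le fun t => ?_
    rcases t with ⟨i, hi⟩
    cases i with
    | zero =>
      have h1 : (a ^ 0 * b ^ (m + 1 - 0) : Module.End kk V) = b * (a ^ 0 * b ^ (m - 0)) := by
        rw [pow_zero, one_mul, one_mul, Nat.sub_zero, Nat.sub_zero, ← pow_succ']
      rw [h1, Module.End.mul_eq_comp, LinearMap.range_comp]
      refine le_trans (Submodule.map_mono (hle m 0 m (by omega))) ?_
      rw [← hm]
      exact hmapb m
    | succ i =>
      have h1 : (a ^ (i + 1) * b ^ (m + 1 - (i + 1)) : Module.End kk V)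
          = a * (a ^ i * b ^ (m - i)) := by
        rw [show m + 1 - (i + 1) = m - i from by omega, ← mul_assoc, ← pow_succ']
      rw [h1, Module.End.mul_eq_comp, LinearMap.range_comp]
      refine le_trans (Submodule.map_mono (hle m i (m - i) (by omega))) ?_
      rw [← hm]
      exact hmapa m
  have hconst1 : ∀ m, W (m + 1) = W m → ∀ l, m ≤ l → W (l + 1) = W l := by
    intro m hm l hl
    induction l, hl using Nat.le_induction with
    | base => exact hm
    | succ l hl ih => exact hstep l ih
  have hconst : ∀ m, W (m + 1) = W m → ∀ l, m ≤ l → W l = W m := by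
    intro m hm l hl
    induction l, hl using Nat.le_induction with
    | base => rfl
    | succ l hl ih => rw [hconst1 m hm l hl, ih]
  obtain ⟨s, hs⟩ := ha
  obtain ⟨t, ht⟩ := hb
  have hbotst : W (s + t) = ⊥ := by
    refine eq_bot_iff.mpr (iSup_le fun u => ?_)
    rcases u with ⟨i, hi⟩
    have h0 : (a ^ i * b ^ (s + t - i) : Module.End kk V) = 0 := by
      rcases le_or_gt s i with h | h
      · rw [show i = s + (i - s) from by omega, pow_add, hs, zero_mul, zero_mul]
      · rw [show s + t - i = t + (s - i) from by omega, pow_add, ht, zero_mul, mul_zero]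
    rw [h0, LinearMap.range_zero]
  have hanti : ∀ {x y : ℕ}, x ≤ y → W y ≤ W x := by
    intro x y hxy
    induction y, hxy using Nat.le_induction with
    | base => exact le_refl _
    | succ l hl ih => exact (hmono l).trans ih
  have hdesc : ∀ m, W m = ⊥ ∨ Module.finrank kk (W m) + m ≤ Module.finrank kk V := by
    intro m
    induction m with
    | zero => right; simpa using Submodule.finrank_le (W 0)
    | succ m ih =>
      rcases ih with h | h
      · left
        exact le_bot_iff.mp (h ▸ hmono m)
      · by_cases he : W (m + 1) = W m
        · left
          have h1 : W (max m (s + t)) = W m := hconst m he _ (le_max_left _ _)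
          have h2 : W (max m (s + t)) ≤ W (s + t) := hanti (le_max_right _ _)
          have h3 : W m = ⊥ := by
            rw [← h1]
            exact le_bot_iff.mp (hbotst ▸ h2)
          rw [he, h3]
        · right
          have hlt : W (m + 1) < W m := lt_of_le_of_ne (hmono m) he
          have := Submodule.finrank_lt_finrank_of_lt hlt
          omega
  have hbot : W (Module.finrank kk V) = ⊥ := by
    rcases hdesc (Module.finrank kk V) with h | h
    · exact h
    · have h0 : Module.finrank kk (W (Module.finrank kk V)) = 0 := by omega
      exact Submodule.finrank_eq_zero.mp h0
  intro i j hij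
  have h0 : a ^ (min i (Module.finrank kk V))
      * b ^ (Module.finrank kk V - min i (Module.finrank kk V)) = 0 := by
    have h1 := hle (Module.finrank kk V) (min i (Module.finrank kk V))
      (Module.finrank kk V - min i (Module.finrank kk V)) (by omega)
    rw [hbot, le_bot_iff, LinearMap.range_eq_bot] at h1
    exact h1
  have hsplit : a ^ i * b ^ j
      = a ^ (i - min i (Module.finrank kk V))
        * (a ^ (min i (Module.finrank kk V))
            * b ^ (Module.finrank kk V - min i (Module.finrank kk V)))
        * b ^ (j - (Module.finrank kk V - min i (Module.finrank kk V))) := by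
    conv_lhs => rw [show i = (i - min i (Module.finrank kk V)) + min i (Module.finrank kk V)
        from by omega, pow_add,
      show j = (Module.finrank kk V - min i (Module.finrank kk V))
          + (j - (Module.finrank kk V - min i (Module.finrank kk V))) from by omega, pow_add]
    simp only [mul_assoc]
  rw [hsplit, h0, mul_zero, zero_mul]

lemma flag_matrix {kk : Type*} [Field kk] {n : ℕ} (A B : Matrix (Fin n) (Fin n) kk)
    (hc : A * B = B * A) (hA : IsNilpotent A) (hB : IsNilpotent B) {i j : ℕ} (hij : n ≤ i + j) :
    A ^ i * B ^ j = 0 := by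
  apply (Matrix.toLinAlgEquiv' (R := kk) (n := Fin n)).injective
  rw [map_mul, map_pow, map_pow, map_zero]
  refine flag_end _ _ (Commute.map (show Commute A B from hc) _)
    (hA.map _) (hB.map _) i j ?_
  rw [Module.finrank_fin_fun]
  exact hij

end Flag

section Matrices

variable (p : ℕ) [hp : Fact p.Prime]

lemma sub_one_pow_p {n : ℕ} (u : Matrix (Fin n) (Fin n) (ZMod p))
    (hu : u ^ p = 1) : (u - 1) ^ p = 0 := by
  rcases Nat.eq_zero_or_pos n with hn | hn
  · subst hn
    have hsub : Subsingleton (Matrix (Fin 0) (Fin 0) (ZMod p)) :=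
      ⟨fun M N => by ext i j; exact i.elim0⟩
    exact hsub.elim _ _
  · haveI : Nonempty (Fin n) := ⟨⟨0, hn⟩⟩
    rw [sub_pow_char_of_commute p (Commute.one_right u), hu, one_pow, sub_self]

lemma aeval_L_nilpotent {R : Type*} [Ring R] [Algebra (ZMod p) R]
    {x : R} (hx : x ^ p = 0) : IsNilpotent (Polynomial.aeval x (Lpoly p)) := by
  refine ⟨p, ?_⟩
  conv_lhs => rw [X_mul_divX_Lpoly p]
  rw [map_mul, Polynomial.aeval_X]
  have hcomm : Commute x (Polynomial.aeval x ((Lpoly p).divX)) := by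
    have h1 := commute_aeval (Commute.refl x) (Polynomial.X : Polynomial (ZMod p)) ((Lpoly p).divX)
    rwa [Polynomial.aeval_X] at h1
  rw [hcomm.mul_pow, hx, zero_mul]

lemma aeval_L_add {n : ℕ} (A B : Matrix (Fin n) (Fin n) (ZMod p)) (hc : A * B = B * A)
    (hv : ∀ i j : ℕ, p ≤ i + j → A ^ i * B ^ j = 0) :
    Polynomial.aeval (A + B + A * B) (Lpoly p)
      = Polynomial.aeval A (Lpoly p) + Polynomial.aeval B (Lpoly p) := by
  classical
  have hcomm : ∀ x ∈ ({A, B} : Set (Matrix (Fin n) (Fin n) (ZMod p))),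
      ∀ y ∈ ({A, B} : Set (Matrix (Fin n) (Fin n) (ZMod p))), x * y = y * x := by
    simp only [Set.mem_insert_iff, Set.mem_singleton_iff]
    rintro x (rfl | rfl) y (rfl | rfl)
    · rfl
    · exact hc
    · exact hc.symm
    · rfl
  let S := Algebra.adjoin (ZMod p) ({A, B} : Set (Matrix (Fin n) (Fin n) (ZMod p)))
  letI : CommRing ↥S := Algebra.adjoinCommRingOfComm (ZMod p) hcomm
  let a : ↥S := ⟨A, Algebra.subset_adjoin (by simp)⟩
  let b : ↥S := ⟨B, Algebra.subset_adjoin (by simp)⟩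
  let v : Fin 2 → ↥S := ![a, b]
  have hP : MvPolynomial.aeval v
      (Polynomial.aeval (MvPolynomial.X 0 + MvPolynomial.X 1
          + MvPolynomial.X 0 * MvPolynomial.X 1 : MvPolynomial (Fin 2) (ZMod p)) (Lpoly p)
        - Polynomial.aeval (MvPolynomial.X 0) (Lpoly p)
        - Polynomial.aeval (MvPolynomial.X 1) (Lpoly p)) = 0 := by
    conv_lhs => rw [← MvPolynomial.support_sum_monomial_coeff
      (Polynomial.aeval (MvPolynomial.X 0 + MvPolynomial.X 1
          + MvPolynomial.X 0 * MvPolynomial.X 1 : MvPolynomial (Fin 2) (ZMod p)) (Lpoly p)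
        - Polynomial.aeval (MvPolynomial.X 0) (Lpoly p)
        - Polynomial.aeval (MvPolynomial.X 1) (Lpoly p))]
    rw [map_sum]
    refine Finset.sum_eq_zero fun d hd => ?_
    rcases lt_or_ge (d 0 + d 1) p with h | h
    · exact absurd (mv_coeff_low p d h) (MvPolynomial.mem_support_iff.mp hd)
    · rw [MvPolynomial.aeval_monomial]
      have hprod : (d.prod fun i k => v i ^ k) = a ^ d 0 * b ^ d 1 := by
        rw [Finsupp.prod_fintype]
        · rw [Fin.prod_univ_two]
          rfl
        · intro i
          exact pow_zero _
      rw [hprod]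
      have hz : a ^ d 0 * b ^ d 1 = 0 := by
        have hval : (Subalgebra.val S) (a ^ d 0 * b ^ d 1) = 0 := by
          rw [map_mul, map_pow, map_pow]
          exact hv (d 0) (d 1) h
        exact Subtype.ext (by simpa using hval)
      rw [hz, mul_zero]
  rw [map_sub, map_sub, ← Polynomial.aeval_algHom_apply, ← Polynomial.aeval_algHom_apply,
    ← Polynomial.aeval_algHom_apply] at hP
  have hZv : (MvPolynomial.aeval v) (MvPolynomial.X 0 + MvPolynomial.X 1
      + MvPolynomial.X 0 * MvPolynomial.X 1 : MvPolynomial (Fin 2) (ZMod p)) = a + b + a * b := by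
    simp [v]
  have hXv0 : (MvPolynomial.aeval v) (MvPolynomial.X 0 : MvPolynomial (Fin 2) (ZMod p)) = a := by
    simp [v]
  have hXv1 : (MvPolynomial.aeval v) (MvPolynomial.X 1 : MvPolynomial (Fin 2) (ZMod p)) = b := by
    simp [v]
  rw [hZv, hXv0, hXv1, sub_sub, sub_eq_zero] at hP
  have hfin := congrArg (Subalgebra.val S) hP
  rw [map_add, ← Polynomial.aeval_algHom_apply, ← Polynomial.aeval_algHom_apply,
    ← Polynomial.aeval_algHom_apply] at hfin
  simpa using hfin

end Matrices

end TlogAux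

open Matrix

/-- The truncated logarithm `log(u) = ∑_{i=1}^{p-1} (-1)^{i+1} (u-1)^i / i`. -/
noncomputable def tlog {k : Type*} [Field k] {n : ℕ} (p : ℕ)
    (u : Matrix (Fin n) (Fin n) k) : Matrix (Fin n) (Fin n) k :=
  ∑ i ∈ Finset.Icc 1 (p - 1), ((-1 : k) ^ (i + 1) * (i : k)⁻¹) • (u - 1) ^ i

lemma TlogAux.tlog_eq_aeval (p : ℕ) [Fact p.Prime] {n : ℕ}
    (u : Matrix (Fin n) (Fin n) (ZMod p)) :
    tlog p u = Polynomial.aeval (u - 1) (TlogAux.Lpoly p) := by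
  rw [tlog, TlogAux.Lpoly, map_sum]
  refine Finset.sum_congr rfl fun i _ => ?_
  rw [_root_.map_mul, _root_.map_pow, Polynomial.aeval_X, Polynomial.aeval_C, Algebra.smul_def]

/-- Let `p ≥ n` be a prime and let `E ⊆ GL_n(𝔽_p)` be an elementary
abelian `p`-subgroup of order `p^r` (i.e. a finite abelian subgroup of exponent dividing
`p` and of order `p^r`).  Then every element of `E` is unipotent, and
`{log g : g ∈ E}` is an `𝔽_p`-linear subspace of `M_n(𝔽_p)` of dimension `r`, all of
whose elements are nilpotent and pairwise commute. -/
theorem tlog_image_of_elementary_abelian {p n r : ℕ} [Fact p.Prime] (hnp : n ≤ p)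
    (E : Subgroup (GL (Fin n) (ZMod p)))
    (habelian : ∀ g ∈ E, ∀ h ∈ E, g * h = h * g)
    (hexp : ∀ g ∈ E, g ^ p = 1)
    (hcard : Nat.card E = p ^ r) :
    (∀ g ∈ E, IsNilpotent ((g : Matrix (Fin n) (Fin n) (ZMod p)) - 1)) ∧
    ∃ V : Submodule (ZMod p) (Matrix (Fin n) (Fin n) (ZMod p)),
      (V : Set (Matrix (Fin n) (Fin n) (ZMod p))) =
        (fun g : GL (Fin n) (ZMod p) => tlog p (g : Matrix (Fin n) (Fin n) (ZMod p))) ''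
          (E : Set (GL (Fin n) (ZMod p))) ∧
      Module.finrank (ZMod p) V = r ∧
      (∀ M ∈ V, IsNilpotent M) ∧
      (∀ M ∈ V, ∀ N ∈ V, M * N = N * M) := by
  classical
  set φ : GL (Fin n) (ZMod p) → Matrix (Fin n) (Fin n) (ZMod p) :=
    fun g => tlog p (g : Matrix (Fin n) (Fin n) (ZMod p)) with hφ
  have hpow : ∀ g ∈ E, ((g : Matrix (Fin n) (Fin n) (ZMod p)) - 1) ^ p = 0 := by
    intro g hg
    refine TlogAux.sub_one_pow_p p _ ?_
    rw [← Units.val_pow_eq_pow_val, hexp g hg, Units.val_one]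
  have hnil1 : ∀ g ∈ E, IsNilpotent ((g : Matrix (Fin n) (Fin n) (ZMod p)) - 1) :=
    fun g hg => ⟨p, hpow g hg⟩
  have hcomm : ∀ g ∈ E, ∀ h ∈ E,
      ((g : Matrix (Fin n) (Fin n) (ZMod p)) - 1)
          * ((h : Matrix (Fin n) (Fin n) (ZMod p)) - 1)
        = ((h : Matrix (Fin n) (Fin n) (ZMod p)) - 1)
          * ((g : Matrix (Fin n) (Fin n) (ZMod p)) - 1) := by
    intro g hg h hh
    have h1 : (g : Matrix (Fin n) (Fin n) (ZMod p)) * (h : Matrix (Fin n) (Fin n) (ZMod p))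
        = (h : Matrix (Fin n) (Fin n) (ZMod p)) * (g : Matrix (Fin n) (Fin n) (ZMod p)) := by
      rw [← Units.val_mul, ← Units.val_mul, habelian g hg h hh]
    have h2 : Commute ((g : Matrix (Fin n) (Fin n) (ZMod p)))
        ((h : Matrix (Fin n) (Fin n) (ZMod p))) := h1
    exact ((h2.sub_left (Commute.one_left _)).sub_right (Commute.one_right _)).eq
  have hvan : ∀ g ∈ E, ∀ h ∈ E, ∀ i j : ℕ, p ≤ i + j →
      ((g : Matrix (Fin n) (Fin n) (ZMod p)) - 1) ^ i
        * ((h : Matrix (Fin n) (Fin n) (ZMod p)) - 1) ^ j = 0 := by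
    intro g hg h hh i j hij
    exact TlogAux.flag_matrix _ _ (hcomm g hg h hh) (hnil1 g hg) (hnil1 h hh)
      (le_trans hnp hij)
  have htlog : ∀ g : GL (Fin n) (ZMod p),
      φ g = Polynomial.aeval ((g : Matrix (Fin n) (Fin n) (ZMod p)) - 1) (TlogAux.Lpoly p) :=
    fun g => TlogAux.tlog_eq_aeval p _
  have hadd : ∀ g ∈ E, ∀ h ∈ E, φ (g * h) = φ g + φ h := by
    intro g hg h hh
    rw [htlog, htlog, htlog]
    have harg : ((g * h : GL (Fin n) (ZMod p)) : Matrix (Fin n) (Fin n) (ZMod p)) - 1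
        = ((g : Matrix (Fin n) (Fin n) (ZMod p)) - 1)
            + ((h : Matrix (Fin n) (Fin n) (ZMod p)) - 1)
          + ((g : Matrix (Fin n) (Fin n) (ZMod p)) - 1)
            * ((h : Matrix (Fin n) (Fin n) (ZMod p)) - 1) := by
      rw [Units.val_mul]
      noncomm_ring
    rw [harg]
    exact TlogAux.aeval_L_add p _ _ (hcomm g hg h hh) (hvan g hg h hh)
  have hone : φ 1 = 0 := by
    rw [htlog]
    have h1 : ((1 : GL (Fin n) (ZMod p)) : Matrix (Fin n) (Fin n) (ZMod p)) - 1 = 0 := by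
      rw [Units.val_one, sub_self]
    rw [h1, Polynomial.aeval_def, Polynomial.eval₂_at_zero, TlogAux.coeff0_Lpoly, map_zero]
  have hnsmul : ∀ g ∈ E, ∀ m : ℕ, φ (g ^ m) = m • φ g := by
    intro g hg m
    induction m with
    | zero => rw [pow_zero, hone, zero_smul]
    | succ m ih => rw [pow_succ, hadd (g ^ m) (pow_mem hg m) g hg, ih, succ_nsmul]
  have hexpND : ∀ g ∈ E,
      Polynomial.aeval (Polynomial.aeval ((g : Matrix (Fin n) (Fin n) (ZMod p)) - 1)
        (TlogAux.Lpoly p)) (TlogAux.Epoly p)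
      = 1 + ((g : Matrix (Fin n) (Fin n) (ZMod p)) - 1) := by
    intro g hg
    exact TlogAux.exp_log p _ (TlogAux.pow_vanish p (hpow g hg))
  have hinj : Set.InjOn φ (E : Set (GL (Fin n) (ZMod p))) := by
    intro g hg h hh hgh
    rw [htlog, htlog] at hgh
    have h1 := hexpND g hg
    rw [hgh, hexpND h hh] at h1
    have h3 := add_left_cancel h1
    exact Units.ext (sub_left_inj.mp h3).symm
  let V : Submodule (ZMod p) (Matrix (Fin n) (Fin n) (ZMod p)) :=
    { carrier := φ '' (E : Set (GL (Fin n) (ZMod p)))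
      add_mem' := by
        rintro x y ⟨g, hg, rfl⟩ ⟨h, hh, rfl⟩
        exact ⟨g * h, mul_mem hg hh, hadd g hg h hh⟩
      zero_mem' := ⟨1, E.one_mem, hone⟩
      smul_mem' := by
        rintro c x ⟨g, hg, rfl⟩
        refine ⟨g ^ (ZMod.val c), pow_mem hg _, ?_⟩
        rw [hnsmul g hg (ZMod.val c), ← Nat.cast_smul_eq_nsmul (ZMod p)]
        congr 1
        exact ZMod.natCast_rightInverse c }
  refine ⟨hnil1, V, rfl, ?_, ?_, ?_⟩
  · have hT : Nat.card ↥(φ '' (E : Set (GL (Fin n) (ZMod p)))) = p ^ r := by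
      rw [Nat.card_image_of_injOn hinj]
      exact hcard
    haveI : Fintype ↥V := Fintype.ofFinite _
    have hcV : Fintype.card ↥V = p ^ r := by
      rw [← Nat.card_eq_fintype_card]
      exact hT
    have hfr := Module.card_eq_pow_finrank (K := ZMod p) (V := ↥V)
    rw [ZMod.card, hcV] at hfr
    exact (Nat.pow_right_injective (Fact.out : p.Prime).two_le hfr.symm)
  · rintro M ⟨g, hg, rfl⟩
    rw [htlog]
    exact TlogAux.aeval_L_nilpotent p (hpow g hg)
  · rintro M ⟨g, hg, rfl⟩ N ⟨h, hh, rfl⟩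
    rw [htlog, htlog]
    exact (TlogAux.commute_aeval (hcomm g hg h hh) _ _).eq
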